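/- Let M be a prime Γ-ring and δ: M → M a left derivation. Then for every a ∈ M, either a lies in the center Z(M) or δ(a) = 0. -/

import Mathlib

/-- A Γ-ring in the sense of Barnes: additive abelian groups `M` and `Γ` with a
triadditive, associative product `M × Γ × M → M`. -/
structure GammaRing (M : Type*) (Γ : Type*) [AddCommGroup M] [AddCommGroup Γ] where
  tri : M → Γ → M → M
  add_left : ∀ (a b : M) (α : Γ) (c : M), tri (a + b) α c = tri a α c + tri b α c
  add_mid : ∀ (a : M) (α β : Γ) (b : M), tri a (α + β) b = tri a α b + tri a β b
  add_right : ∀ (a : M) (α : Γ) (b c : M), tri a α (b + c) = tri a α b + tri a α c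
  assoc : ∀ (a : M) (α : Γ) (b : M) (β : Γ) (c : M),
    tri (tri a α b) β c = tri a α (tri b β c)

namespace GammaRing

variable {M Γ : Type*} [AddCommGroup M] [AddCommGroup Γ]

/-- The commutator `[a,b]_α = aαb - bαa`. -/
def comm (G : GammaRing M Γ) (a : M) (α : Γ) (b : M) : M :=
  G.tri a α b - G.tri b α a

/-- The center `Z(M)`. -/
def center (G : GammaRing M Γ) : Set M :=
  {a | ∀ (b : M) (α : Γ), G.tri a α b = G.tri b α a}

/-- A left derivation: additive with `δ(xαy) = xαδ(y) + yαδ(x)`. -/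
def IsLeftDerivation (G : GammaRing M Γ) (δ : M → M) : Prop :=
  (∀ x y : M, δ (x + y) = δ x + δ y) ∧
  ∀ (x : M) (α : Γ) (y : M), δ (G.tri x α y) = G.tri x α (δ y) + G.tri y α (δ x)

/-- A derivation: additive with `μ(xαy) = μ(x)αy + xαμ(y)`. -/
def IsDerivation (G : GammaRing M Γ) (μ : M → M) : Prop :=
  (∀ x y : M, μ (x + y) = μ x + μ y) ∧
  ∀ (x : M) (α : Γ) (y : M), μ (G.tri x α y) = G.tri (μ x) α y + G.tri x α (μ y)

/-- An endomorphism: additive with `σ(xαy) = σ(x)ασ(y)`. -/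
def IsEndomorphism (G : GammaRing M Γ) (σ : M → M) : Prop :=
  (∀ x y : M, σ (x + y) = σ x + σ y) ∧
  ∀ (x : M) (α : Γ) (y : M), σ (G.tri x α y) = G.tri (σ x) α (σ y)

/-- Semiprime: `aΓMΓa = 0` implies `a = 0`. -/
def IsSemiprime (G : GammaRing M Γ) : Prop :=
  ∀ a : M, (∀ (α : Γ) (m : M) (β : Γ), G.tri (G.tri a α m) β a = 0) → a = 0

/-- Prime: `aΓMΓb = 0` implies `a = 0` or `b = 0`. -/
def IsPrime (G : GammaRing M Γ) : Prop :=
  ∀ a b : M, (∀ (α : Γ) (m : M) (β : Γ), G.tri (G.tri a α m) β b = 0) → a = 0 ∨ b = 0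

/-- Strong commutativity preserving: `[f(x),f(y)]_α = [x,y]_α`. -/
def IsSCP (G : GammaRing M Γ) (f : M → M) : Prop :=
  ∀ (x : M) (α : Γ) (y : M), G.comm (f x) α (f y) = G.comm x α y

end GammaRing


namespace GammaRingAux

variable {M Γ : Type*} [AddCommGroup M] [AddCommGroup Γ]

theorem tri_zero_right (G : GammaRing M Γ) (a : M) (α : Γ) : G.tri a α 0 = 0 := by
  have h := G.add_right a α 0 0
  rw [add_zero] at h
  exact right_eq_add.mp h

theorem tri_sub_left (G : GammaRing M Γ) (p q : M) (α : Γ) (r : M) :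
    G.tri (p - q) α r = G.tri p α r - G.tri q α r := by
  have h := G.add_left (p - q) q α r
  rw [sub_add_cancel] at h
  rw [h]; abel

theorem delta_zero (G : GammaRing M Γ) (δ : M → M) (hδ : G.IsLeftDerivation δ) :
    δ 0 = 0 := by
  have h := hδ.1 0 0
  rw [add_zero] at h
  exact right_eq_add.mp h

theorem delta_sub (G : GammaRing M Γ) (δ : M → M) (hδ : G.IsLeftDerivation δ)
    (p q : M) : δ (p - q) = δ p - δ q := by
  have hneg : δ (-q) = -δ q := by
    have h := hδ.1 q (-q)
    rw [add_neg_cancel, delta_zero G δ hδ] at h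
    exact (eq_neg_of_add_eq_zero_right h.symm)
  rw [sub_eq_add_neg, hδ.1, hneg, sub_eq_add_neg]

/-- The fundamental identity Q. -/
theorem factQ (G : GammaRing M Γ) (δ : M → M) (hδ : G.IsLeftDerivation δ)
    (x y z : M) (α β : Γ) :
    G.tri z β (G.tri y α (δ x)) + G.tri x α (G.tri y β (δ z)) =
      G.tri y α (G.tri z β (δ x)) + G.tri y α (G.tri x β (δ z)) := by
  have e1 : δ (G.tri (G.tri z β x) α y) =
      G.tri z β (G.tri x α (δ y)) +
        (G.tri y α (G.tri z β (δ x)) + G.tri y α (G.tri x β (δ z))) := by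
    rw [hδ.2, hδ.2, G.add_right, G.assoc]
  have e2 : δ (G.tri z β (G.tri x α y)) =
      G.tri z β (G.tri x α (δ y)) +
        (G.tri z β (G.tri y α (δ x)) + G.tri x α (G.tri y β (δ z))) := by
    rw [hδ.2, hδ.2, G.add_right, G.assoc, add_assoc]
  have e3 : G.tri z β (G.tri x α (δ y)) +
        (G.tri y α (G.tri z β (δ x)) + G.tri y α (G.tri x β (δ z))) =
      G.tri z β (G.tri x α (δ y)) +
        (G.tri z β (G.tri y α (δ x)) + G.tri x α (G.tri y β (δ z))) := by
    rw [← e1, ← e2, G.assoc]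
  exact (add_left_cancel e3).symm

/-- K : zβ(xα δx) = xα(zβ δx). -/
theorem factK (G : GammaRing M Γ) (δ : M → M) (hδ : G.IsLeftDerivation δ)
    (x z : M) (α β : Γ) :
    G.tri z β (G.tri x α (δ x)) = G.tri x α (G.tri z β (δ x)) := by
  have h := factQ G δ hδ x x z α β
  exact add_right_cancel h

/-- GS : aα(yβ δa) = aβ(yα δa). -/
theorem factGS (G : GammaRing M Γ) (δ : M → M) (hδ : G.IsLeftDerivation δ)
    (a y : M) (α β : Γ) :
    G.tri a α (G.tri y β (δ a)) = G.tri a β (G.tri y α (δ a)) := by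
  have h := factQ G δ hδ a y a α β
  -- h : aβ(yα δa) + aα(yβ δa) = yα(aβ δa) + yα(aβ δa)
  have k : G.tri y α (G.tri a β (δ a)) = G.tri a β (G.tri y α (δ a)) :=
    factK G δ hδ a y β α
  rw [k] at h
  -- h : aβ(yα δa) + aα(yβ δa) = aβ(yα δa) + aβ(yα δa)
  exact add_left_cancel h

/-- The commutator is killed when left-multiplied into δa. -/
theorem comm_tri_delta (G : GammaRing M Γ) (δ : M → M) (hδ : G.IsLeftDerivation δ)
    (a x : M) (β γ : Γ) :
    G.tri (G.comm a β x) γ (δ a) = 0 := by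
  rw [GammaRing.comm, tri_sub_left]
  have h1 : G.tri (G.tri a β x) γ (δ a) = G.tri x γ (G.tri a β (δ a)) := by
    rw [G.assoc]
    -- aβ(xγ δa) = xγ(aβ δa) : factK with z := x, reading right-to-left
    exact (factK G δ hδ a x β γ).symm
  have h2 : G.tri (G.tri x β a) γ (δ a) = G.tri x γ (G.tri a β (δ a)) := by
    rw [G.assoc]
    -- xβ(aγ δa) = aγ(xβ δa) = aβ(xγ δa) = xγ(aβ δa)
    rw [factK G δ hδ a x γ β, factGS G δ hδ a x γ β]
    exact (factK G δ hδ a x β γ).symm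
  rw [h1, h2, sub_self]

theorem delta_comm (G : GammaRing M Γ) (δ : M → M) (hδ : G.IsLeftDerivation δ)
    (a x : M) (β : Γ) : δ (G.comm a β x) = 0 := by
  rw [GammaRing.comm, delta_sub G δ hδ, hδ.2, hδ.2]
  abel

/-- Key: (cγm)α δa = 0 for c the commutator. -/
theorem comm_tri_tri_delta (G : GammaRing M Γ) (δ : M → M)
    (hδ : G.IsLeftDerivation δ) (a x : M) (β : Γ) (γ : Γ) (m : M) (α : Γ) :
    G.tri (G.tri (G.comm a β x) γ m) α (δ a) = 0 := by
  have hdc : δ (G.comm a β x) = 0 := delta_comm G δ hδ a x β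
  -- Q with x := c, z := a, y := m, using δc = 0 :
  have h := factQ G δ hδ (G.comm a β x) m a γ α
  -- h : aα(mγ δc) + cγ(mα δa) = mγ(aα δc) + mγ(cα δa)
  rw [hdc, tri_zero_right, tri_zero_right, tri_zero_right,
    zero_add, zero_add] at h
  -- h : cγ(mα δa) = mγ(cα δa)
  rw [G.assoc, h, comm_tri_delta G δ hδ a x β α, tri_zero_right]

end GammaRingAux

/-- In a prime Γ-ring with a left derivation `δ`, every element is central
or is killed by `δ`. -/
theorem prime_left_derivation_central_or_zero {M Γ : Type*}
    [AddCommGroup M] [AddCommGroup Γ] (G : GammaRing M Γ) (hp : G.IsPrime)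
    (δ : M → M) (hδ : G.IsLeftDerivation δ) :
    ∀ a : M, a ∈ G.center ∨ δ a = 0 := by
  intro a
  by_cases hw : δ a = 0
  · exact Or.inr hw
  · left
    intro b α
    have h0 : ∀ (γ : Γ) (m : M) (β : Γ),
        G.tri (G.tri (G.comm a α b) γ m) β (δ a) = 0 := fun γ m β =>
      GammaRingAux.comm_tri_tri_delta G δ hδ a b α γ m β
    rcases hp (G.comm a α b) (δ a) h0 with h | h
    · have := sub_eq_zero.mp h
      exact this
    · exact absurd h hw
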